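/- Let b ∈ ℝ and let N be a parity-supported refined lattice family satisfying the initial conditions and the asymmetric recursion at every (g,n,L) with 2g−2+n > 1 and L₁+⋯+L_n even. For L₁,L₂ ∈ ℤ_{>0} set s = L₁+L₂, q = L₁²+L₂², π = L₁L₂, and Δ = |L₁−L₂|. Then: if L₁ and L₂ are both even, N_{1,2}(L₁,L₂) = (b²/1536)·(Δ⁴ + 4Δ³(s−2) + 2Δ²(q+2π−6s+6) − 16Δ(s−2) + (s−4)(s−2)(3q+6π+6s−8)) + ((b+1)/768)·(q−8)(q−4); if L₁ and L₂ are both odd, N_{1,2}(L₁,L₂) = (b²/1536)·(Δ⁴ + 4Δ³(s−2) + 2Δ²(q+2π−6s) − 16Δ(s−2) + 12(s−2)² + (s−4)(s−2)(3q+6π+6s−8)) + ((b+1)/768)·(q−10)(q−2). -/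

import Mathlib

open scoped BigOperators

noncomputable section

/-- The ramp function `[x]₊ = max x 0`. -/
def ramp (x : ℝ) : ℝ := max x 0

/-- The kernel `𝓡(L₁, L_m, p)`. -/
def kerR (L1 Lm p : ℝ) : ℝ :=
  (1 / (2 * L1)) * (ramp (L1 + Lm - p) - ramp (-L1 + Lm - p) + ramp (L1 - Lm - p))

/-- The kernel `𝓔(L₁, p)`. -/
def kerE (L1 p : ℝ) : ℝ := (1 / (2 * L1)) * ramp (L1 - p)

/-- The kernel `𝓓(L₁, p, q)`. -/
def kerD (L1 p q : ℝ) : ℝ := (1 / L1) * ramp (L1 - p - q)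

/-- The sublist of entries of `L` whose (0-based) index lies in `S`, in order. -/
def selectIdxs {α : Type*} (L : List α) (S : Finset ℕ) : List α :=
  (L.zipIdx.map Prod.swap).filterMap fun p => if p.1 ∈ S then some p.2 else none

/-- The sublist of entries of `L` whose (0-based) index does not lie in `S`, in order. -/
def removeIdxs {α : Type*} (L : List α) (S : Finset ℕ) : List α :=
  (L.zipIdx.map Prod.swap).filterMap fun p => if p.1 ∈ S then none else some p.2

/-- A refined lattice family is indexed by `h = 2g ∈ ℤ` and a tuple of boundary lengths
(a list); by convention it vanishes when `g < 0` or `2g - 2 + n ≤ 0`. -/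
def ZeroConvention (N : ℤ → List ℤ → ℝ) : Prop :=
  ∀ (h : ℤ) (L : List ℤ), h < 0 ∨ h + (L.length : ℤ) ≤ 2 → N h L = 0

/-- The family vanishes on tuples of positive integers with odd sum. -/
def ParitySupported (N : ℤ → List ℤ → ℝ) : Prop :=
  ∀ (h : ℤ) (L : List ℤ), (∀ x ∈ L, 0 < x) → ¬ Even L.sum → N h L = 0

/-- The initial conditions for `N_{0,3}`, `N_{1/2,2}` and `N_{1,1}` (recall `h = 2g`). -/
def InitialConditions (b : ℝ) (N : ℤ → List ℤ → ℝ) : Prop :=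
  (∀ L1 L2 L3 : ℤ, 0 < L1 → 0 < L2 → 0 < L3 →
    N 0 [L1, L2, L3] = (1 + (-1 : ℝ) ^ (L1 + L2 + L3)) / 2 * (1 / 2)) ∧
  (∀ L1 L2 : ℤ, 0 < L1 → 0 < L2 →
    N 1 [L1, L2] = (1 + (-1 : ℝ) ^ (L1 + L2)) / 2 *
      (b * (((max L1 L2 : ℤ) : ℝ) - 1) / 4)) ∧
  (∀ L1 : ℤ, 0 < L1 →
    N 2 [L1] = (1 + (-1 : ℝ) ^ L1) / 2 *
      (((1 + b) * ((L1 : ℝ) ^ 2 - 4) +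
        b ^ 2 * (5 * (L1 : ℝ) ^ 2 - 12 * (L1 : ℝ) + 4)) / 96))

/-- The asymmetric recursion at `(g, n, L)` with `h = 2g`, `L = L₁ :: T`, `n = 1 + T.length`.
All sums over `p, q ∈ ℤ_{>0}` are finite because the kernels vanish for large `p, q`;
they are written here as sums up to the corresponding vanishing threshold. -/
def AsymRecAt (b : ℝ) (N : ℤ → List ℤ → ℝ) (h : ℤ) (L1 : ℤ) (T : List ℤ) : Prop :=
  N h (L1 :: T) =
    (∑ m ∈ Finset.range T.length, ∑ p ∈ Finset.Icc 1 (L1 + T.getD m 0),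
        (p : ℝ) * kerR (L1 : ℝ) ((T.getD m 0 : ℤ) : ℝ) (p : ℝ) * N h (p :: T.eraseIdx m))
    + b * (∑ p ∈ Finset.Icc 1 L1,
        (p : ℝ) * ((L1 : ℝ) - 1) * kerE (L1 : ℝ) (p : ℝ) * N (h - 1) (p :: T))
    + ∑ p ∈ Finset.Icc 1 L1, ∑ q ∈ Finset.Icc 1 L1,
        (p : ℝ) * (q : ℝ) * kerD (L1 : ℝ) (p : ℝ) (q : ℝ) *
          (((1 + b) / 2) * N (h - 2) (p :: q :: T)
            + ∑ h1 ∈ Finset.Icc 0 h, ∑ S ∈ (Finset.range T.length).powerset,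
                N h1 (p :: selectIdxs T S) * N (h - h1) (q :: removeIdxs T S))

/-- The family satisfies the asymmetric recursion at every `(g, n, L)` with
`2g - 2 + n > 1`, `L ∈ (ℤ_{>0})ⁿ` and `L₁ + ⋯ + L_n` even. -/
def AsymRecursion (b : ℝ) (N : ℤ → List ℤ → ℝ) : Prop :=
  ∀ (h : ℤ) (L1 : ℤ) (T : List ℤ), 0 < L1 → (∀ x ∈ T, 0 < x) →
    3 < h + (1 + (T.length : ℤ)) → Even (L1 + T.sum) → AsymRecAt b N h L1 T

/-- The symmetric recursion at `(g, n, L)` with `h = 2g`. -/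
def SymRecAt (b : ℝ) (N : ℤ → List ℤ → ℝ) (h : ℤ) (L : List ℤ) : Prop :=
  2 * (L.sum : ℝ) * N h L =
    (∑ i ∈ Finset.range L.length, ∑ j ∈ (Finset.range L.length).erase i,
        ∑ p ∈ Finset.Icc 1 (L.getD i 0 + L.getD j 0),
          (p : ℝ) * ramp (((L.getD i 0 : ℤ) : ℝ) + ((L.getD j 0 : ℤ) : ℝ) - (p : ℝ)) *
            N h (p :: removeIdxs L {i, j}))
    + b * (∑ i ∈ Finset.range L.length, ∑ p ∈ Finset.Icc 1 (L.getD i 0),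
        (p : ℝ) * (((L.getD i 0 : ℤ) : ℝ) - 1) *
          ramp (((L.getD i 0 : ℤ) : ℝ) - (p : ℝ)) * N (h - 1) (p :: removeIdxs L {i}))
    + ∑ i ∈ Finset.range L.length, ∑ p ∈ Finset.Icc 1 (L.getD i 0),
        ∑ q ∈ Finset.Icc 1 (L.getD i 0),
          (p : ℝ) * (q : ℝ) * ramp (((L.getD i 0 : ℤ) : ℝ) - (p : ℝ) - (q : ℝ)) *
            ((1 + b) * N (h - 2) (p :: q :: removeIdxs L {i})
              + 2 * ∑ h1 ∈ Finset.Icc 0 h,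
                  ∑ S ∈ ((Finset.range L.length).erase i).powerset,
                    N h1 (p :: selectIdxs L S) *
                      N (h - h1) (q :: selectIdxs L (((Finset.range L.length).erase i) \ S)))



lemma ramp_of_nonneg {x : ℝ} (h : 0 ≤ x) : ramp x = x := max_eq_left h
lemma ramp_of_nonpos {x : ℝ} (h : x ≤ 0) : ramp x = 0 := max_eq_right h
lemma max_eq_add_ramp (x y : ℝ) : (max x y : ℝ) = x + ramp (y - x) := by
  rcases le_total x y with h | h
  · rw [max_eq_right h, ramp_of_nonneg (by linarith)]; ring
  · rw [max_eq_left h, ramp_of_nonpos (by linarith)]; ring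

lemma sum_Icc_top (f : ℤ → ℝ) {a b : ℤ} (h : a ≤ b + 1) :
    ∑ p ∈ Finset.Icc a (b+1), f p = (∑ p ∈ Finset.Icc a b, f p) + f (b+1) := by
  have : Finset.Icc a (b+1) = insert (b+1) (Finset.Icc a b) := by
    ext x; simp [Finset.mem_Icc, Finset.mem_insert]; omega
  rw [this, Finset.sum_insert (by simp), add_comm]

lemma rampSum (x n : ℤ) (hxn : x ≤ n) (g : ℤ → ℝ) :
    ∑ p ∈ Finset.Icc 1 n, ramp ((x:ℝ) - (p:ℝ)) * g p
      = ∑ p ∈ Finset.Icc 1 x, ((x:ℝ) - (p:ℝ)) * g p := by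
  rw [← Finset.sum_subset (Finset.Icc_subset_Icc_right hxn)]
  · exact Finset.sum_congr rfl fun p hp => by
      rw [ramp_of_nonneg]; simp [Finset.mem_Icc] at hp
      have : (p:ℝ) ≤ (x:ℝ) := by exact_mod_cast hp.2
      linarith
  · intro p hp hnp
    simp [Finset.mem_Icc] at hp hnp
    rw [ramp_of_nonpos, zero_mul]
    have : (x:ℝ) < (p:ℝ) := by exact_mod_cast hnp hp.1
    linarith

lemma sumE (c0 c1 c2 c3 c4 d0 d1 d2 d3 d4 : ℝ) (n : ℤ) (hn : 0 ≤ n) (he : Even n) :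
    (∑ p ∈ Finset.Icc (1:ℤ) n,
      if Even p then c0 + c1*(p:ℝ) + c2*(p:ℝ)^2 + c3*(p:ℝ)^3 + c4*(p:ℝ)^4
      else d0 + d1*(p:ℝ) + d2*(p:ℝ)^2 + d3*(p:ℝ)^3 + d4*(p:ℝ)^4) =
      (n:ℝ) * ((7/30)*d4 - (1/6)*d2 + (1/2)*d0 - (4/15)*c4 + (1/3)*c2 + (1/2)*c1 + (1/2)*c0)
      + (n:ℝ)^2 * (-(1/4)*d3 + (1/4)*d1 + (1/2)*c3 + (1/2)*c2 + (1/4)*c1)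
      + (n:ℝ)^3 * (-(1/3)*d4 + (1/6)*d2 + (2/3)*c4 + (1/2)*c3 + (1/6)*c2)
      + (n:ℝ)^4 * ((1/8)*d3 + (1/2)*c4 + (1/8)*c3)
      + (n:ℝ)^5 * ((1/10)*d4 + (1/10)*c4) := by
  obtain ⟨t, ht⟩ := he
  subst ht
  have ht0 : 0 ≤ t := by omega
  obtain ⟨k, rfl⟩ := Int.eq_ofNat_of_zero_le ht0
  clear hn ht0
  induction k with
  | zero => norm_num
  | succ k IH =>
      have e1 : ((k+1:ℕ):ℤ) + ((k+1:ℕ):ℤ) = ((k:ℕ):ℤ) + ((k:ℕ):ℤ) + 1 + 1 := by push_cast; ring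
      rw [e1, sum_Icc_top _ (by omega), sum_Icc_top _ (by omega)]
      rw [IH]
      rw [if_neg (by simp only [Int.even_iff]; omega), if_pos (by simp only [Int.even_iff]; omega)]
      push_cast
      ring

lemma sumO (c0 c1 c2 c3 c4 d0 d1 d2 d3 d4 : ℝ) (n : ℤ) (hn : 0 ≤ n) (he : Odd n) :
    (∑ p ∈ Finset.Icc (1:ℤ) n,
      if Even p then c0 + c1*(p:ℝ) + c2*(p:ℝ)^2 + c3*(p:ℝ)^3 + c4*(p:ℝ)^4
      else d0 + d1*(p:ℝ) + d2*(p:ℝ)^2 + d3*(p:ℝ)^3 + d4*(p:ℝ)^4) =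
      (-(1/8)*d3 + (1/4)*d1 + (1/2)*d0 + (1/8)*c3 - (1/4)*c1 - (1/2)*c0)
      + (n:ℝ) * (-(4/15)*d4 + (1/3)*d2 + (1/2)*d1 + (1/2)*d0 + (7/30)*c4 - (1/6)*c2 + (1/2)*c0)
      + (n:ℝ)^2 * ((1/2)*d3 + (1/2)*d2 + (1/4)*d1 - (1/4)*c3 + (1/4)*c1)
      + (n:ℝ)^3 * ((2/3)*d4 + (1/2)*d3 + (1/6)*d2 - (1/3)*c4 + (1/6)*c2)
      + (n:ℝ)^4 * ((1/2)*d4 + (1/8)*d3 + (1/8)*c3)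
      + (n:ℝ)^5 * ((1/10)*d4 + (1/10)*c4) := by
  obtain ⟨t, ht⟩ := he
  subst ht
  have ht0 : 0 ≤ t := by omega
  obtain ⟨k, rfl⟩ := Int.eq_ofNat_of_zero_le ht0
  clear hn ht0
  induction k with
  | zero =>
      rw [show (2*((0:ℕ):ℤ)+1) = 1 by norm_num, Finset.Icc_self, Finset.sum_singleton]
      rw [if_neg (by decide)]
      norm_num; ring
  | succ k IH =>
      have e1 : 2*((k+1:ℕ):ℤ) + 1 = (2*((k:ℕ):ℤ) + 1 + 1) + 1 := by push_cast; ring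
      rw [e1, sum_Icc_top _ (by omega), sum_Icc_top _ (by omega)]
      rw [IH]
      rw [if_pos (by simp [parity_simps] : Even (2*((k:ℕ):ℤ)+1+1)), if_neg (by simp [parity_simps] : ¬ Even (2*((k:ℕ):ℤ)+1+1+1))]
      push_cast
      ring

lemma select_empty (c : ℤ) : selectIdxs [c] (∅ : Finset ℕ) = [] := by simp [selectIdxs]
lemma select_zero (c : ℤ) : selectIdxs [c] ({0} : Finset ℕ) = [c] := by simp [selectIdxs]
lemma remove_empty (c : ℤ) : removeIdxs [c] (∅ : Finset ℕ) = [c] := by simp [removeIdxs]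
lemma remove_zero (c : ℤ) : removeIdxs [c] ({0} : Finset ℕ) = [] := by simp [removeIdxs]

lemma reduceN12 (b : ℝ) (N : ℤ → List ℤ → ℝ)
    (hzero : ZeroConvention N) (hrec : AsymRecursion b N)
    (a c : ℤ) (ha : 0 < a) (hc : 0 < c) (hpar : Even (a + c)) :
    N 2 [a, c] =
      (∑ p ∈ Finset.Icc 1 (a + c), (p:ℝ) * kerR (a:ℝ) (c:ℝ) (p:ℝ) * N 2 [p])
      + b * (∑ p ∈ Finset.Icc 1 a, (p:ℝ) * ((a:ℝ) - 1) * kerE (a:ℝ) (p:ℝ) * N 1 [p, c])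
      + ∑ p ∈ Finset.Icc 1 a, ∑ q ∈ Finset.Icc 1 a,
          (p:ℝ) * (q:ℝ) * kerD (a:ℝ) (p:ℝ) (q:ℝ) * ((1 + b) / 2 * N 0 [p, q, c]) := by
  have h := hrec 2 a [c] ha (by intro x hx; simp at hx; omega) (by norm_num)
      (by simpa using hpar)
  unfold AsymRecAt at h
  norm_num [List.getD_cons_zero, List.eraseIdx_cons_zero] at h
  rw [h]
  have hsplit : ∀ p q : ℤ, (∑ h1 ∈ Finset.Icc (0:ℤ) 2, ∑ S ∈ ({0} : Finset ℕ).powerset,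
      N h1 (p :: selectIdxs [c] S) * N (2 - h1) (q :: removeIdxs [c] S)) = 0 := by
    intro p q
    refine Finset.sum_eq_zero fun h1 hh1 => Finset.sum_eq_zero fun S hS => ?_
    simp only [Finset.mem_Icc] at hh1
    rw [Finset.mem_powerset, Finset.subset_singleton_iff] at hS
    rcases hS with rfl | rfl
    · rw [select_empty, remove_empty]
      rcases le_or_gt h1 1 with h | h
      · rw [hzero h1 [p] (Or.inr (by simp; omega)), zero_mul]
      · rw [hzero (2 - h1) [q, c] (Or.inr (by simp; omega)), mul_zero]
    · rw [select_zero, remove_zero]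
      rcases le_or_gt h1 0 with h | h
      · rw [hzero h1 [p, c] (Or.inr (by simp; omega)), zero_mul]
      · rw [hzero (2 - h1) [q] (Or.inr (by simp; omega)), mul_zero]
  simp only [hsplit, add_zero]

set_option maxHeartbeats 4000000 in
lemma main_ee (b : ℝ) (N : ℤ → List ℤ → ℝ) (hzero : ZeroConvention N)
    (hinit : InitialConditions b N) (hrec : AsymRecursion b N)
    (a c : ℤ) (ha : 0 < a) (hc : 0 < c) (hea : Even a) (hec : Even c) :
    N 2 [a, c] = b ^ 2 / 1536 * (|(a:ℝ) - (c:ℝ)| ^ 4 + 4 * |(a:ℝ) - (c:ℝ)| ^ 3 * (((a:ℝ)+(c:ℝ)) - 2) + 2 * |(a:ℝ) - (c:ℝ)| ^ 2 * (((a:ℝ)^2+(c:ℝ)^2) + 2 * ((a:ℝ)*(c:ℝ)) - 6 * ((a:ℝ)+(c:ℝ)) + 6) - 16 * |(a:ℝ) - (c:ℝ)| * (((a:ℝ)+(c:ℝ)) - 2) + (((a:ℝ)+(c:ℝ)) - 4) * (((a:ℝ)+(c:ℝ)) - 2) * (3 * ((a:ℝ)^2+(c:ℝ)^2) + 6 *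 ((a:ℝ)*(c:ℝ)) + 6 * ((a:ℝ)+(c:ℝ)) - 8)) + (b + 1) / 768 * (((a:ℝ)^2+(c:ℝ)^2) - 8) * (((a:ℝ)^2+(c:ℝ)^2) - 4) := by
  obtain ⟨hi03, hi12, hi11⟩ := hinit
  rw [reduceN12 b N hzero hrec a c ha hc (by simp only [Int.even_iff, Int.odd_iff] at hea hec ⊢; omega)]
  -- Piece A: split kernel
  have hsA : ∀ p ∈ Finset.Icc (1:ℤ) (a+c), (p:ℝ) * kerR (a:ℝ) (c:ℝ) (p:ℝ) * N 2 [p]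
      = (if Even p then 0 + (((a:ℝ)+(c:ℝ))*(4*b^2-4*b-4)*(1/(192*(a:ℝ))))*(p:ℝ) + ((-(4*b^2-4*b-4) + ((a:ℝ)+(c:ℝ))*(-12*b^2))*(1/(192*(a:ℝ))))*(p:ℝ)^2 + ((12*b^2 + ((a:ℝ)+(c:ℝ))*(1+b+5*b^2))*(1/(192*(a:ℝ))))*(p:ℝ)^3 + (-(1+b+5*b^2)*(1/(192*(a:ℝ))))*(p:ℝ)^4 else 0 + 0*(p:ℝ) + 0*(p:ℝ)^2 + 0*(p:ℝ)^3 + 0*(p:ℝ)^4)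
        + (ramp (((a-c:ℤ):ℝ) - (p:ℝ)) * (if Even p then (p:ℝ)*((1+b)*((p:ℝ)^2-4)+b^2*(5*(p:ℝ)^2-12*(p:ℝ)+4))*(1/(192*(a:ℝ))) else 0)
          - ramp (((c-a:ℤ):ℝ) - (p:ℝ)) * (if Even p then (p:ℝ)*((1+b)*((p:ℝ)^2-4)+b^2*(5*(p:ℝ)^2-12*(p:ℝ)+4))*(1/(192*(a:ℝ))) else 0)) := by
    intro p hp
    simp only [Finset.mem_Icc] at hp
    rw [hi11 p (by omega)]
    simp only [kerR]
    rw [ramp_of_nonneg (show (0:ℝ) ≤ (a:ℝ)+(c:ℝ)-(p:ℝ) by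
      have h' : (p:ℝ) ≤ (a:ℝ)+(c:ℝ) := by exact_mod_cast hp.2
      linarith)]
    rw [show (-(a:ℝ)+(c:ℝ)-(p:ℝ)) = (((c-a:ℤ):ℝ)-(p:ℝ)) by push_cast; ring]
    rw [show ((a:ℝ)-(c:ℝ)-(p:ℝ)) = (((a-c:ℤ):ℝ)-(p:ℝ)) by push_cast; ring]
    rcases Int.even_or_odd p with hpe | hpo
    · simp only [hpe.neg_one_zpow, if_pos hpe]; ring
    · simp only [hpo.neg_one_zpow, if_neg (show ¬ Even p from (by simp only [Int.even_iff, Int.odd_iff] at *; omega))]; ring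
  rw [Finset.sum_congr rfl hsA, Finset.sum_add_distrib, Finset.sum_sub_distrib,
      rampSum (a-c) (a+c) (by omega) _, rampSum (c-a) (a+c) (by omega) _,
      sumE 0 (((a:ℝ)+(c:ℝ))*(4*b^2-4*b-4)*(1/(192*(a:ℝ)))) ((-(4*b^2-4*b-4) + ((a:ℝ)+(c:ℝ))*(-12*b^2))*(1/(192*(a:ℝ)))) ((12*b^2 + ((a:ℝ)+(c:ℝ))*(1+b+5*b^2))*(1/(192*(a:ℝ)))) (-(1+b+5*b^2)*(1/(192*(a:ℝ)))) 0 0 0 0 0 (a+c) (by omega) (by simp only [Int.even_iff, Int.odd_iff] at *; omega)]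
  -- Piece B: split max
  have hsB : ∀ p ∈ Finset.Icc (1:ℤ) a, (p:ℝ) * ((a:ℝ) - 1) * kerE (a:ℝ) (p:ℝ) * N 1 [p, c]
      = (if Even p then 0 + (-(a:ℝ)*(b*((a:ℝ)-1)/(8*(a:ℝ))))*(p:ℝ) + (((a:ℝ)+1)*(b*((a:ℝ)-1)/(8*(a:ℝ))))*(p:ℝ)^2 + (-(b*((a:ℝ)-1)/(8*(a:ℝ))))*(p:ℝ)^3 + 0*(p:ℝ)^4 else 0 + 0*(p:ℝ) + 0*(p:ℝ)^2 + 0*(p:ℝ)^3 + 0*(p:ℝ)^4)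
        + ramp ((c:ℝ) - (p:ℝ)) * (if Even p then (b*((a:ℝ)-1)/(8*(a:ℝ)))*((p:ℝ)*((a:ℝ)-(p:ℝ))) else 0) := by
    intro p hp
    simp only [Finset.mem_Icc] at hp
    rw [hi12 p c (by omega) hc, Int.cast_max, max_eq_add_ramp]
    simp only [kerE]
    rw [ramp_of_nonneg (show (0:ℝ) ≤ (a:ℝ)-(p:ℝ) by
      have h' : (p:ℝ) ≤ (a:ℝ) := by exact_mod_cast hp.2
      linarith)]
    rcases Int.even_or_odd p with hpe | hpo
    · simp only [(show Even (p+c) from (by simp only [Int.even_iff, Int.odd_iff] at *; omega)).neg_one_zpow, if_pos hpe]; ring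
    · simp only [(show Odd (p+c) from (by simp only [Int.even_iff, Int.odd_iff] at *; omega)).neg_one_zpow,
        if_neg (show ¬ Even p from (by simp only [Int.even_iff, Int.odd_iff] at *; omega))]; ring
  rw [Finset.sum_congr rfl hsB, Finset.sum_add_distrib, sumE 0 (-(a:ℝ)*(b*((a:ℝ)-1)/(8*(a:ℝ)))) (((a:ℝ)+1)*(b*((a:ℝ)-1)/(8*(a:ℝ)))) (-(b*((a:ℝ)-1)/(8*(a:ℝ)))) 0 0 0 0 0 0 (a) (by omega) hea]
  -- Piece C: inner sum
  have hinner : ∀ p ∈ Finset.Icc (1:ℤ) a,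
      (∑ q ∈ Finset.Icc (1:ℤ) a, (p:ℝ) * (q:ℝ) * kerD (a:ℝ) (p:ℝ) (q:ℝ) * ((1 + b) / 2 * N 0 [p, q, c]))
      = (if Even p then ((1+b)/(4*(a:ℝ)))*(p:ℝ)*(((a:ℝ)-(p:ℝ))^3/12 - ((a:ℝ)-(p:ℝ))/3) else ((1+b)/(4*(a:ℝ)))*(p:ℝ)*(((a:ℝ)-(p:ℝ))^3/12 - ((a:ℝ)-(p:ℝ))/12)) := by
    intro p hp
    simp only [Finset.mem_Icc] at hp
    have hq : ∀ q ∈ Finset.Icc (1:ℤ) a,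
        (p:ℝ) * (q:ℝ) * kerD (a:ℝ) (p:ℝ) (q:ℝ) * ((1 + b) / 2 * N 0 [p, q, c])
        = ramp (((a-p:ℤ):ℝ) - (q:ℝ)) * (if Even (p+q+c) then (1+b)/(4*(a:ℝ))*(p:ℝ)*(q:ℝ) else 0) := by
      intro q hq'
      simp only [Finset.mem_Icc] at hq'
      rw [hi03 p q c (by omega) (by omega) hc]
      simp only [kerD]
      rcases Int.even_or_odd (p+q+c) with hpqc | hpqc
      · rw [hpqc.neg_one_zpow, if_pos hpqc]
        rw [show (((a-p:ℤ):ℝ) - (q:ℝ)) = ((a:ℝ)-(p:ℝ)-(q:ℝ)) by push_cast; ring]; ring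
      · rw [hpqc.neg_one_zpow, if_neg (by simp only [Int.even_iff, Int.odd_iff] at *; omega)]; ring
    rcases Int.even_or_odd p with hpe | hpo
    · rw [if_pos hpe]
      have hq2 : ∀ q ∈ Finset.Icc (1:ℤ) a,
          (p:ℝ) * (q:ℝ) * kerD (a:ℝ) (p:ℝ) (q:ℝ) * ((1 + b) / 2 * N 0 [p, q, c])
          = ramp (((a-p:ℤ):ℝ) - (q:ℝ)) * (if Even q then (1+b)/(4*(a:ℝ))*(p:ℝ)*(q:ℝ) else 0) := by
        intro q hq'
        rw [hq q hq']
        congr 1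
        rcases Int.even_or_odd q with hqe | hqo
        · rw [if_pos ((by simp only [Int.even_iff, Int.odd_iff] at *; omega : Even (p+q+c))), if_pos hqe]
        · rw [if_neg ((by simp only [Int.even_iff, Int.odd_iff] at *; omega : ¬ Even (p+q+c))), if_neg ((by simp only [Int.even_iff, Int.odd_iff] at *; omega : ¬ Even q))]
      rw [Finset.sum_congr rfl hq2, rampSum (a-p) a (by omega) _]
      have hq3 : ∀ q ∈ Finset.Icc (1:ℤ) (a-p),
          (((a-p:ℤ):ℝ) - (q:ℝ)) * (if Even q then (1+b)/(4*(a:ℝ))*(p:ℝ)*(q:ℝ) else 0) = (if Even q then 0 + ((1+b)/(4*(a:ℝ))*(p:ℝ)*((a:ℝ)-(p:ℝ)))*(q:ℝ) + (-((1+b)/(4*(a:ℝ))*(p:ℝ)))*(q:ℝ)^2 + 0*(q:ℝ)^3 + 0*(q:ℝ)^4 else 0 + 0*(q:ℝ) + 0*(q:ℝ)^2 + 0*(q:ℝ)^3 + 0*(q:ℝ)^4) := by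
        intro q hq''
        split_ifs <;> push_cast <;> ring
      rw [Finset.sum_congr rfl hq3, sumE 0 ((1+b)/(4*(a:ℝ))*(p:ℝ)*((a:ℝ)-(p:ℝ))) (-((1+b)/(4*(a:ℝ))*(p:ℝ))) 0 0 0 0 0 0 0 (a-p) (by omega) (by simp only [Int.even_iff, Int.odd_iff] at *; omega)]
      push_cast; ring
    · rw [if_neg (by simp only [Int.even_iff, Int.odd_iff] at *; omega)]
      have hq2 : ∀ q ∈ Finset.Icc (1:ℤ) a,
          (p:ℝ) * (q:ℝ) * kerD (a:ℝ) (p:ℝ) (q:ℝ) * ((1 + b) / 2 * N 0 [p, q, c])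
          = ramp (((a-p:ℤ):ℝ) - (q:ℝ)) * (if Even q then 0 else (1+b)/(4*(a:ℝ))*(p:ℝ)*(q:ℝ)) := by
        intro q hq'
        rw [hq q hq']
        congr 1
        rcases Int.even_or_odd q with hqe | hqo
        · rw [if_neg ((by simp only [Int.even_iff, Int.odd_iff] at *; omega : ¬ Even (p+q+c))), if_pos hqe]
        · rw [if_pos ((by simp only [Int.even_iff, Int.odd_iff] at *; omega : Even (p+q+c))), if_neg ((by simp only [Int.even_iff, Int.odd_iff] at *; omega : ¬ Even q))]
      rw [Finset.sum_congr rfl hq2, rampSum (a-p) a (by omega) _]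
      have hq3 : ∀ q ∈ Finset.Icc (1:ℤ) (a-p),
          (((a-p:ℤ):ℝ) - (q:ℝ)) * (if Even q then 0 else (1+b)/(4*(a:ℝ))*(p:ℝ)*(q:ℝ)) = (if Even q then 0 + 0*(q:ℝ) + 0*(q:ℝ)^2 + 0*(q:ℝ)^3 + 0*(q:ℝ)^4 else 0 + ((1+b)/(4*(a:ℝ))*(p:ℝ)*((a:ℝ)-(p:ℝ)))*(q:ℝ) + (-((1+b)/(4*(a:ℝ))*(p:ℝ)))*(q:ℝ)^2 + 0*(q:ℝ)^3 + 0*(q:ℝ)^4) := by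
        intro q hq''
        split_ifs <;> push_cast <;> ring
      rw [Finset.sum_congr rfl hq3, sumO 0 0 0 0 0 0 ((1+b)/(4*(a:ℝ))*(p:ℝ)*((a:ℝ)-(p:ℝ))) (-((1+b)/(4*(a:ℝ))*(p:ℝ))) 0 0 (a-p) (by omega) (by simp only [Int.even_iff, Int.odd_iff] at *; omega)]
      push_cast; ring
  rw [Finset.sum_congr rfl hinner]
  have hCout : ∀ p ∈ Finset.Icc (1:ℤ) a, (if Even p then ((1+b)/(4*(a:ℝ)))*(p:ℝ)*(((a:ℝ)-(p:ℝ))^3/12 - ((a:ℝ)-(p:ℝ))/3) else ((1+b)/(4*(a:ℝ)))*(p:ℝ)*(((a:ℝ)-(p:ℝ))^3/12 - ((a:ℝ)-(p:ℝ))/12)) = (if Even p then 0 + (((1+b)/(4*(a:ℝ)))*((a:ℝ)^3-4*(a:ℝ))/12)*(p:ℝ) + (((1+b)/(4*(a:ℝ)))*(4-3*(a:ℝ)^2)/12)*(p:ℝ)^2 + (((1+b)/(4*(a:ℝ)))*(a:ℝ)/4)*(p:ℝ)^3 + (-((1+b)/(4*(a:ℝ)))/12)*(p:ℝ)^4 else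 0 + (((1+b)/(4*(a:ℝ)))*((a:ℝ)^3-(a:ℝ))/12)*(p:ℝ) + (((1+b)/(4*(a:ℝ)))*(1-3*(a:ℝ)^2)/12)*(p:ℝ)^2 + (((1+b)/(4*(a:ℝ)))*(a:ℝ)/4)*(p:ℝ)^3 + (-((1+b)/(4*(a:ℝ)))/12)*(p:ℝ)^4) := by
    intro p hp
    split_ifs <;> ring
  rw [Finset.sum_congr rfl hCout, sumE 0 (((1+b)/(4*(a:ℝ)))*((a:ℝ)^3-4*(a:ℝ))/12) (((1+b)/(4*(a:ℝ)))*(4-3*(a:ℝ)^2)/12) (((1+b)/(4*(a:ℝ)))*(a:ℝ)/4) (-((1+b)/(4*(a:ℝ)))/12) 0 (((1+b)/(4*(a:ℝ)))*((a:ℝ)^3-(a:ℝ))/12) (((1+b)/(4*(a:ℝ)))*(1-3*(a:ℝ)^2)/12) (((1+b)/(4*(a:ℝ)))*(a:ℝ)/4) (-((1+b)/(4*(a:ℝ)))/12) (a) (by omega) hea]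
  -- subcases
  have haR : ((a:ℝ)) ≠ 0 := by positivity
  rcases le_total c a with hca | hac
  · -- c ≤ a
    rw [show Finset.Icc (1:ℤ) (c-a) = ∅ from Finset.Icc_eq_empty (by omega), Finset.sum_empty]
    have hA2 : ∀ p ∈ Finset.Icc (1:ℤ) (a-c),
        (((a-c:ℤ):ℝ) - (p:ℝ)) * (if Even p then (p:ℝ)*((1+b)*((p:ℝ)^2-4)+b^2*(5*(p:ℝ)^2-12*(p:ℝ)+4))*(1/(192*(a:ℝ))) else 0) = (if Even p then 0 + (((a:ℝ)-(c:ℝ))*(4*b^2-4*b-4)*(1/(192*(a:ℝ))))*(p:ℝ) + ((-(4*b^2-4*b-4) + ((a:ℝ)-(c:ℝ))*(-12*b^2))*(1/(192*(a:ℝ))))*(p:ℝ)^2 + ((12*b^2 + ((a:ℝ)-(c:ℝ))*(1+b+5*b^2))*(1/(192*(a:ℝ))))*(p:ℝ)^3 + (-(1+b+5*b^2)*(1/(192*(a:ℝ))))*(p:ℝ)^4 else 0 + 0*(p:ℝ) + 0*(p:ℝ)^2 + 0*(p:ℝ)^3 + 0*(p:ℝ)^4) := by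
      intro p hp
      split_ifs <;> push_cast <;> ring
    rw [Finset.sum_congr rfl hA2, sumE 0 (((a:ℝ)-(c:ℝ))*(4*b^2-4*b-4)*(1/(192*(a:ℝ)))) ((-(4*b^2-4*b-4) + ((a:ℝ)-(c:ℝ))*(-12*b^2))*(1/(192*(a:ℝ)))) ((12*b^2 + ((a:ℝ)-(c:ℝ))*(1+b+5*b^2))*(1/(192*(a:ℝ)))) (-(1+b+5*b^2)*(1/(192*(a:ℝ)))) 0 0 0 0 0 (a-c) (by omega) (by simp only [Int.even_iff, Int.odd_iff] at *; omega)]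
    rw [rampSum c a (by omega) _]
    have hB2 : ∀ p ∈ Finset.Icc (1:ℤ) c,
        ((c:ℝ) - (p:ℝ)) * (if Even p then (b*((a:ℝ)-1)/(8*(a:ℝ)))*((p:ℝ)*((a:ℝ)-(p:ℝ))) else 0) = (if Even p then 0 + ((a:ℝ)*(c:ℝ)*(b*((a:ℝ)-1)/(8*(a:ℝ))))*(p:ℝ) + (-((a:ℝ)+(c:ℝ))*(b*((a:ℝ)-1)/(8*(a:ℝ))))*(p:ℝ)^2 + ((b*((a:ℝ)-1)/(8*(a:ℝ))))*(p:ℝ)^3 + 0*(p:ℝ)^4 else 0 + 0*(p:ℝ) + 0*(p:ℝ)^2 + 0*(p:ℝ)^3 + 0*(p:ℝ)^4) := by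
      intro p hp
      split_ifs <;> push_cast <;> ring
    rw [Finset.sum_congr rfl hB2, sumE 0 ((a:ℝ)*(c:ℝ)*(b*((a:ℝ)-1)/(8*(a:ℝ)))) (-((a:ℝ)+(c:ℝ))*(b*((a:ℝ)-1)/(8*(a:ℝ)))) ((b*((a:ℝ)-1)/(8*(a:ℝ)))) 0 0 0 0 0 0 (c) (by omega) hec]
    rw [abs_of_nonneg (show (0:ℝ) ≤ (a:ℝ) - (c:ℝ) by
      have h' : (c:ℝ) ≤ (a:ℝ) := by exact_mod_cast hca
      linarith)]
    push_cast
    field_simp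
    ring
  · -- a ≤ c
    rw [show Finset.Icc (1:ℤ) (a-c) = ∅ from Finset.Icc_eq_empty (by omega), Finset.sum_empty]
    have hA3 : ∀ p ∈ Finset.Icc (1:ℤ) (c-a),
        (((c-a:ℤ):ℝ) - (p:ℝ)) * (if Even p then (p:ℝ)*((1+b)*((p:ℝ)^2-4)+b^2*(5*(p:ℝ)^2-12*(p:ℝ)+4))*(1/(192*(a:ℝ))) else 0) = (if Even p then 0 + (((c:ℝ)-(a:ℝ))*(4*b^2-4*b-4)*(1/(192*(a:ℝ))))*(p:ℝ) + ((-(4*b^2-4*b-4) + ((c:ℝ)-(a:ℝ))*(-12*b^2))*(1/(192*(a:ℝ))))*(p:ℝ)^2 + ((12*b^2 + ((c:ℝ)-(a:ℝ))*(1+b+5*b^2))*(1/(192*(a:ℝ))))*(p:ℝ)^3 + (-(1+b+5*b^2)*(1/(192*(a:ℝ))))*(p:ℝ)^4 else 0 + 0*(p:ℝ) + 0*(p:ℝ)^2 + 0*(p:ℝ)^3 + 0*(p:ℝ)^4) := by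
      intro p hp
      split_ifs <;> push_cast <;> ring
    rw [Finset.sum_congr rfl hA3, sumE 0 (((c:ℝ)-(a:ℝ))*(4*b^2-4*b-4)*(1/(192*(a:ℝ)))) ((-(4*b^2-4*b-4) + ((c:ℝ)-(a:ℝ))*(-12*b^2))*(1/(192*(a:ℝ)))) ((12*b^2 + ((c:ℝ)-(a:ℝ))*(1+b+5*b^2))*(1/(192*(a:ℝ)))) (-(1+b+5*b^2)*(1/(192*(a:ℝ)))) 0 0 0 0 0 (c-a) (by omega) (by simp only [Int.even_iff, Int.odd_iff] at *; omega)]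
    have hB2 : ∀ p ∈ Finset.Icc (1:ℤ) a,
        ramp ((c:ℝ) - (p:ℝ)) * (if Even p then (b*((a:ℝ)-1)/(8*(a:ℝ)))*((p:ℝ)*((a:ℝ)-(p:ℝ))) else 0) = (if Even p then 0 + ((a:ℝ)*(c:ℝ)*(b*((a:ℝ)-1)/(8*(a:ℝ))))*(p:ℝ) + (-((a:ℝ)+(c:ℝ))*(b*((a:ℝ)-1)/(8*(a:ℝ))))*(p:ℝ)^2 + ((b*((a:ℝ)-1)/(8*(a:ℝ))))*(p:ℝ)^3 + 0*(p:ℝ)^4 else 0 + 0*(p:ℝ) + 0*(p:ℝ)^2 + 0*(p:ℝ)^3 + 0*(p:ℝ)^4) := by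
      intro p hp
      rw [ramp_of_nonneg (show (0:ℝ) ≤ (c:ℝ)-(p:ℝ) by
        have h1' : p ≤ c := le_trans (Finset.mem_Icc.mp hp).2 hac
        have h' : (p:ℝ) ≤ (c:ℝ) := by exact_mod_cast h1'
        linarith)]
      split_ifs <;> push_cast <;> ring
    rw [Finset.sum_congr rfl hB2, sumE 0 ((a:ℝ)*(c:ℝ)*(b*((a:ℝ)-1)/(8*(a:ℝ)))) (-((a:ℝ)+(c:ℝ))*(b*((a:ℝ)-1)/(8*(a:ℝ)))) ((b*((a:ℝ)-1)/(8*(a:ℝ)))) 0 0 0 0 0 0 (a) (by omega) hea]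
    rw [abs_of_nonpos (show (a:ℝ) - (c:ℝ) ≤ (0:ℝ) by
      have h' : (a:ℝ) ≤ (c:ℝ) := by exact_mod_cast hac
      linarith)]
    push_cast
    field_simp
    ring


set_option maxHeartbeats 4000000 in
lemma main_oo (b : ℝ) (N : ℤ → List ℤ → ℝ) (hzero : ZeroConvention N)
    (hinit : InitialConditions b N) (hrec : AsymRecursion b N)
    (a c : ℤ) (ha : 0 < a) (hc : 0 < c) (hea : Odd a) (hec : Odd c) :
    N 2 [a, c] = b ^ 2 / 1536 * (|(a:ℝ) - (c:ℝ)| ^ 4 + 4 * |(a:ℝ) - (c:ℝ)| ^ 3 * (((a:ℝ)+(c:ℝ)) - 2) + 2 * |(a:ℝ) - (c:ℝ)| ^ 2 * (((a:ℝ)^2+(c:ℝ)^2) + 2 * ((a:ℝ)*(c:ℝ)) - 6 * ((a:ℝ)+(c:ℝ))) - 16 * |(a:ℝ) - (c:ℝ)| * (((a:ℝ)+(c:ℝ)) - 2) + 12 * (((a:ℝ)+(c:ℝ)) - 2) ^ 2 + (((a:ℝ)+(c:ℝ)) - 4) * (((a:ℝ)+(c:ℝ)) - 2) * (3 * ((a:ℝ)^2+(c:ℝ)^2)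 + 6 * ((a:ℝ)*(c:ℝ)) + 6 * ((a:ℝ)+(c:ℝ)) - 8)) + (b + 1) / 768 * (((a:ℝ)^2+(c:ℝ)^2) - 10) * (((a:ℝ)^2+(c:ℝ)^2) - 2) := by
  obtain ⟨hi03, hi12, hi11⟩ := hinit
  rw [reduceN12 b N hzero hrec a c ha hc (by simp only [Int.even_iff, Int.odd_iff] at hea hec ⊢; omega)]
  -- Piece A: split kernel
  have hsA : ∀ p ∈ Finset.Icc (1:ℤ) (a+c), (p:ℝ) * kerR (a:ℝ) (c:ℝ) (p:ℝ) * N 2 [p]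
      = (if Even p then 0 + (((a:ℝ)+(c:ℝ))*(4*b^2-4*b-4)*(1/(192*(a:ℝ))))*(p:ℝ) + ((-(4*b^2-4*b-4) + ((a:ℝ)+(c:ℝ))*(-12*b^2))*(1/(192*(a:ℝ))))*(p:ℝ)^2 + ((12*b^2 + ((a:ℝ)+(c:ℝ))*(1+b+5*b^2))*(1/(192*(a:ℝ))))*(p:ℝ)^3 + (-(1+b+5*b^2)*(1/(192*(a:ℝ))))*(p:ℝ)^4 else 0 + 0*(p:ℝ) + 0*(p:ℝ)^2 + 0*(p:ℝ)^3 + 0*(p:ℝ)^4)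
        + (ramp (((a-c:ℤ):ℝ) - (p:ℝ)) * (if Even p then (p:ℝ)*((1+b)*((p:ℝ)^2-4)+b^2*(5*(p:ℝ)^2-12*(p:ℝ)+4))*(1/(192*(a:ℝ))) else 0)
          - ramp (((c-a:ℤ):ℝ) - (p:ℝ)) * (if Even p then (p:ℝ)*((1+b)*((p:ℝ)^2-4)+b^2*(5*(p:ℝ)^2-12*(p:ℝ)+4))*(1/(192*(a:ℝ))) else 0)) := by
    intro p hp
    simp only [Finset.mem_Icc] at hp
    rw [hi11 p (by omega)]
    simp only [kerR]
    rw [ramp_of_nonneg (show (0:ℝ) ≤ (a:ℝ)+(c:ℝ)-(p:ℝ) by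
      have h' : (p:ℝ) ≤ (a:ℝ)+(c:ℝ) := by exact_mod_cast hp.2
      linarith)]
    rw [show (-(a:ℝ)+(c:ℝ)-(p:ℝ)) = (((c-a:ℤ):ℝ)-(p:ℝ)) by push_cast; ring]
    rw [show ((a:ℝ)-(c:ℝ)-(p:ℝ)) = (((a-c:ℤ):ℝ)-(p:ℝ)) by push_cast; ring]
    rcases Int.even_or_odd p with hpe | hpo
    · simp only [hpe.neg_one_zpow, if_pos hpe]; ring
    · simp only [hpo.neg_one_zpow, if_neg (show ¬ Even p from (by simp only [Int.even_iff, Int.odd_iff] at *; omega))]; ring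
  rw [Finset.sum_congr rfl hsA, Finset.sum_add_distrib, Finset.sum_sub_distrib,
      rampSum (a-c) (a+c) (by omega) _, rampSum (c-a) (a+c) (by omega) _,
      sumE 0 (((a:ℝ)+(c:ℝ))*(4*b^2-4*b-4)*(1/(192*(a:ℝ)))) ((-(4*b^2-4*b-4) + ((a:ℝ)+(c:ℝ))*(-12*b^2))*(1/(192*(a:ℝ)))) ((12*b^2 + ((a:ℝ)+(c:ℝ))*(1+b+5*b^2))*(1/(192*(a:ℝ)))) (-(1+b+5*b^2)*(1/(192*(a:ℝ)))) 0 0 0 0 0 (a+c) (by omega) (by simp only [Int.even_iff, Int.odd_iff] at *; omega)]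
  -- Piece B: split max
  have hsB : ∀ p ∈ Finset.Icc (1:ℤ) a, (p:ℝ) * ((a:ℝ) - 1) * kerE (a:ℝ) (p:ℝ) * N 1 [p, c]
      = (if Even p then 0 + 0*(p:ℝ) + 0*(p:ℝ)^2 + 0*(p:ℝ)^3 + 0*(p:ℝ)^4 else 0 + (-(a:ℝ)*(b*((a:ℝ)-1)/(8*(a:ℝ))))*(p:ℝ) + (((a:ℝ)+1)*(b*((a:ℝ)-1)/(8*(a:ℝ))))*(p:ℝ)^2 + (-(b*((a:ℝ)-1)/(8*(a:ℝ))))*(p:ℝ)^3 + 0*(p:ℝ)^4)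
        + ramp ((c:ℝ) - (p:ℝ)) * (if Even p then 0 else (b*((a:ℝ)-1)/(8*(a:ℝ)))*((p:ℝ)*((a:ℝ)-(p:ℝ)))) := by
    intro p hp
    simp only [Finset.mem_Icc] at hp
    rw [hi12 p c (by omega) hc, Int.cast_max, max_eq_add_ramp]
    simp only [kerE]
    rw [ramp_of_nonneg (show (0:ℝ) ≤ (a:ℝ)-(p:ℝ) by
      have h' : (p:ℝ) ≤ (a:ℝ) := by exact_mod_cast hp.2
      linarith)]
    rcases Int.even_or_odd p with hpe | hpo
    · simp only [(show Odd (p+c) from (by simp only [Int.even_iff, Int.odd_iff] at *; omega)).neg_one_zpow, if_pos hpe]; ring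
    · simp only [(show Even (p+c) from (by simp only [Int.even_iff, Int.odd_iff] at *; omega)).neg_one_zpow,
        if_neg (show ¬ Even p from (by simp only [Int.even_iff, Int.odd_iff] at *; omega))]; ring
  rw [Finset.sum_congr rfl hsB, Finset.sum_add_distrib, sumO 0 0 0 0 0 0 (-(a:ℝ)*(b*((a:ℝ)-1)/(8*(a:ℝ)))) (((a:ℝ)+1)*(b*((a:ℝ)-1)/(8*(a:ℝ)))) (-(b*((a:ℝ)-1)/(8*(a:ℝ)))) 0 (a) (by omega) hea]
  -- Piece C: inner sum
  have hinner : ∀ p ∈ Finset.Icc (1:ℤ) a,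
      (∑ q ∈ Finset.Icc (1:ℤ) a, (p:ℝ) * (q:ℝ) * kerD (a:ℝ) (p:ℝ) (q:ℝ) * ((1 + b) / 2 * N 0 [p, q, c]))
      = (if Even p then ((1+b)/(4*(a:ℝ)))*(p:ℝ)*(((a:ℝ)-(p:ℝ))^3/12 - ((a:ℝ)-(p:ℝ))/12) else ((1+b)/(4*(a:ℝ)))*(p:ℝ)*(((a:ℝ)-(p:ℝ))^3/12 - ((a:ℝ)-(p:ℝ))/3)) := by
    intro p hp
    simp only [Finset.mem_Icc] at hp
    have hq : ∀ q ∈ Finset.Icc (1:ℤ) a,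
        (p:ℝ) * (q:ℝ) * kerD (a:ℝ) (p:ℝ) (q:ℝ) * ((1 + b) / 2 * N 0 [p, q, c])
        = ramp (((a-p:ℤ):ℝ) - (q:ℝ)) * (if Even (p+q+c) then (1+b)/(4*(a:ℝ))*(p:ℝ)*(q:ℝ) else 0) := by
      intro q hq'
      simp only [Finset.mem_Icc] at hq'
      rw [hi03 p q c (by omega) (by omega) hc]
      simp only [kerD]
      rcases Int.even_or_odd (p+q+c) with hpqc | hpqc
      · rw [hpqc.neg_one_zpow, if_pos hpqc]
        rw [show (((a-p:ℤ):ℝ) - (q:ℝ)) = ((a:ℝ)-(p:ℝ)-(q:ℝ)) by push_cast; ring]; ring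
      · rw [hpqc.neg_one_zpow, if_neg (by simp only [Int.even_iff, Int.odd_iff] at *; omega)]; ring
    rcases Int.even_or_odd p with hpe | hpo
    · rw [if_pos hpe]
      have hq2 : ∀ q ∈ Finset.Icc (1:ℤ) a,
          (p:ℝ) * (q:ℝ) * kerD (a:ℝ) (p:ℝ) (q:ℝ) * ((1 + b) / 2 * N 0 [p, q, c])
          = ramp (((a-p:ℤ):ℝ) - (q:ℝ)) * (if Even q then 0 else (1+b)/(4*(a:ℝ))*(p:ℝ)*(q:ℝ)) := by
        intro q hq'
        rw [hq q hq']
        congr 1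
        rcases Int.even_or_odd q with hqe | hqo
        · rw [if_neg ((by simp only [Int.even_iff, Int.odd_iff] at *; omega : ¬ Even (p+q+c))), if_pos hqe]
        · rw [if_pos ((by simp only [Int.even_iff, Int.odd_iff] at *; omega : Even (p+q+c))), if_neg ((by simp only [Int.even_iff, Int.odd_iff] at *; omega : ¬ Even q))]
      rw [Finset.sum_congr rfl hq2, rampSum (a-p) a (by omega) _]
      have hq3 : ∀ q ∈ Finset.Icc (1:ℤ) (a-p),
          (((a-p:ℤ):ℝ) - (q:ℝ)) * (if Even q then 0 else (1+b)/(4*(a:ℝ))*(p:ℝ)*(q:ℝ)) = (if Even q then 0 + 0*(q:ℝ) + 0*(q:ℝ)^2 + 0*(q:ℝ)^3 + 0*(q:ℝ)^4 else 0 + ((1+b)/(4*(a:ℝ))*(p:ℝ)*((a:ℝ)-(p:ℝ)))*(q:ℝ) + (-((1+b)/(4*(a:ℝ))*(p:ℝ)))*(q:ℝ)^2 + 0*(q:ℝ)^3 + 0*(q:ℝ)^4) := by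
        intro q hq''
        split_ifs <;> push_cast <;> ring
      rw [Finset.sum_congr rfl hq3, sumO 0 0 0 0 0 0 ((1+b)/(4*(a:ℝ))*(p:ℝ)*((a:ℝ)-(p:ℝ))) (-((1+b)/(4*(a:ℝ))*(p:ℝ))) 0 0 (a-p) (by omega) (by simp only [Int.even_iff, Int.odd_iff] at *; omega)]
      push_cast; ring
    · rw [if_neg (by simp only [Int.even_iff, Int.odd_iff] at *; omega)]
      have hq2 : ∀ q ∈ Finset.Icc (1:ℤ) a,
          (p:ℝ) * (q:ℝ) * kerD (a:ℝ) (p:ℝ) (q:ℝ) * ((1 + b) / 2 * N 0 [p, q, c])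
          = ramp (((a-p:ℤ):ℝ) - (q:ℝ)) * (if Even q then (1+b)/(4*(a:ℝ))*(p:ℝ)*(q:ℝ) else 0) := by
        intro q hq'
        rw [hq q hq']
        congr 1
        rcases Int.even_or_odd q with hqe | hqo
        · rw [if_pos ((by simp only [Int.even_iff, Int.odd_iff] at *; omega : Even (p+q+c))), if_pos hqe]
        · rw [if_neg ((by simp only [Int.even_iff, Int.odd_iff] at *; omega : ¬ Even (p+q+c))), if_neg ((by simp only [Int.even_iff, Int.odd_iff] at *; omega : ¬ Even q))]
      rw [Finset.sum_congr rfl hq2, rampSum (a-p) a (by omega) _]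
      have hq3 : ∀ q ∈ Finset.Icc (1:ℤ) (a-p),
          (((a-p:ℤ):ℝ) - (q:ℝ)) * (if Even q then (1+b)/(4*(a:ℝ))*(p:ℝ)*(q:ℝ) else 0) = (if Even q then 0 + ((1+b)/(4*(a:ℝ))*(p:ℝ)*((a:ℝ)-(p:ℝ)))*(q:ℝ) + (-((1+b)/(4*(a:ℝ))*(p:ℝ)))*(q:ℝ)^2 + 0*(q:ℝ)^3 + 0*(q:ℝ)^4 else 0 + 0*(q:ℝ) + 0*(q:ℝ)^2 + 0*(q:ℝ)^3 + 0*(q:ℝ)^4) := by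
        intro q hq''
        split_ifs <;> push_cast <;> ring
      rw [Finset.sum_congr rfl hq3, sumE 0 ((1+b)/(4*(a:ℝ))*(p:ℝ)*((a:ℝ)-(p:ℝ))) (-((1+b)/(4*(a:ℝ))*(p:ℝ))) 0 0 0 0 0 0 0 (a-p) (by omega) (by simp only [Int.even_iff, Int.odd_iff] at *; omega)]
      push_cast; ring
  rw [Finset.sum_congr rfl hinner]
  have hCout : ∀ p ∈ Finset.Icc (1:ℤ) a, (if Even p then ((1+b)/(4*(a:ℝ)))*(p:ℝ)*(((a:ℝ)-(p:ℝ))^3/12 - ((a:ℝ)-(p:ℝ))/12) else ((1+b)/(4*(a:ℝ)))*(p:ℝ)*(((a:ℝ)-(p:ℝ))^3/12 - ((a:ℝ)-(p:ℝ))/3)) = (if Even p then 0 + (((1+b)/(4*(a:ℝ)))*((a:ℝ)^3-(a:ℝ))/12)*(p:ℝ) + (((1+b)/(4*(a:ℝ)))*(1-3*(a:ℝ)^2)/12)*(p:ℝ)^2 + (((1+b)/(4*(a:ℝ)))*(a:ℝ)/4)*(p:ℝ)^3 + (-((1+b)/(4*(a:ℝ)))/12)*(p:ℝ)^4 else 0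 + (((1+b)/(4*(a:ℝ)))*((a:ℝ)^3-4*(a:ℝ))/12)*(p:ℝ) + (((1+b)/(4*(a:ℝ)))*(4-3*(a:ℝ)^2)/12)*(p:ℝ)^2 + (((1+b)/(4*(a:ℝ)))*(a:ℝ)/4)*(p:ℝ)^3 + (-((1+b)/(4*(a:ℝ)))/12)*(p:ℝ)^4) := by
    intro p hp
    split_ifs <;> ring
  rw [Finset.sum_congr rfl hCout, sumO 0 (((1+b)/(4*(a:ℝ)))*((a:ℝ)^3-(a:ℝ))/12) (((1+b)/(4*(a:ℝ)))*(1-3*(a:ℝ)^2)/12) (((1+b)/(4*(a:ℝ)))*(a:ℝ)/4) (-((1+b)/(4*(a:ℝ)))/12) 0 (((1+b)/(4*(a:ℝ)))*((a:ℝ)^3-4*(a:ℝ))/12) (((1+b)/(4*(a:ℝ)))*(4-3*(a:ℝ)^2)/12) (((1+b)/(4*(a:ℝ)))*(a:ℝ)/4) (-((1+b)/(4*(a:ℝ)))/12) (a) (by omega) hea]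
  -- subcases
  have haR : ((a:ℝ)) ≠ 0 := by positivity
  rcases le_total c a with hca | hac
  · -- c ≤ a
    rw [show Finset.Icc (1:ℤ) (c-a) = ∅ from Finset.Icc_eq_empty (by omega), Finset.sum_empty]
    have hA2 : ∀ p ∈ Finset.Icc (1:ℤ) (a-c),
        (((a-c:ℤ):ℝ) - (p:ℝ)) * (if Even p then (p:ℝ)*((1+b)*((p:ℝ)^2-4)+b^2*(5*(p:ℝ)^2-12*(p:ℝ)+4))*(1/(192*(a:ℝ))) else 0) = (if Even p then 0 + (((a:ℝ)-(c:ℝ))*(4*b^2-4*b-4)*(1/(192*(a:ℝ))))*(p:ℝ) + ((-(4*b^2-4*b-4) + ((a:ℝ)-(c:ℝ))*(-12*b^2))*(1/(192*(a:ℝ))))*(p:ℝ)^2 + ((12*b^2 + ((a:ℝ)-(c:ℝ))*(1+b+5*b^2))*(1/(192*(a:ℝ))))*(p:ℝ)^3 + (-(1+b+5*b^2)*(1/(192*(a:ℝ))))*(p:ℝ)^4 else 0 + 0*(p:ℝ) + 0*(p:ℝ)^2 + 0*(p:ℝ)^3 + 0*(p:ℝ)^4) := by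
      intro p hp
      split_ifs <;> push_cast <;> ring
    rw [Finset.sum_congr rfl hA2, sumE 0 (((a:ℝ)-(c:ℝ))*(4*b^2-4*b-4)*(1/(192*(a:ℝ)))) ((-(4*b^2-4*b-4) + ((a:ℝ)-(c:ℝ))*(-12*b^2))*(1/(192*(a:ℝ)))) ((12*b^2 + ((a:ℝ)-(c:ℝ))*(1+b+5*b^2))*(1/(192*(a:ℝ)))) (-(1+b+5*b^2)*(1/(192*(a:ℝ)))) 0 0 0 0 0 (a-c) (by omega) (by simp only [Int.even_iff, Int.odd_iff] at *; omega)]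
    rw [rampSum c a (by omega) _]
    have hB2 : ∀ p ∈ Finset.Icc (1:ℤ) c,
        ((c:ℝ) - (p:ℝ)) * (if Even p then 0 else (b*((a:ℝ)-1)/(8*(a:ℝ)))*((p:ℝ)*((a:ℝ)-(p:ℝ)))) = (if Even p then 0 + 0*(p:ℝ) + 0*(p:ℝ)^2 + 0*(p:ℝ)^3 + 0*(p:ℝ)^4 else 0 + ((a:ℝ)*(c:ℝ)*(b*((a:ℝ)-1)/(8*(a:ℝ))))*(p:ℝ) + (-((a:ℝ)+(c:ℝ))*(b*((a:ℝ)-1)/(8*(a:ℝ))))*(p:ℝ)^2 + ((b*((a:ℝ)-1)/(8*(a:ℝ))))*(p:ℝ)^3 + 0*(p:ℝ)^4) := by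
      intro p hp
      split_ifs <;> push_cast <;> ring
    rw [Finset.sum_congr rfl hB2, sumO 0 0 0 0 0 0 ((a:ℝ)*(c:ℝ)*(b*((a:ℝ)-1)/(8*(a:ℝ)))) (-((a:ℝ)+(c:ℝ))*(b*((a:ℝ)-1)/(8*(a:ℝ)))) ((b*((a:ℝ)-1)/(8*(a:ℝ)))) 0 (c) (by omega) hec]
    rw [abs_of_nonneg (show (0:ℝ) ≤ (a:ℝ) - (c:ℝ) by
      have h' : (c:ℝ) ≤ (a:ℝ) := by exact_mod_cast hca
      linarith)]
    push_cast
    field_simp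
    ring
  · -- a ≤ c
    rw [show Finset.Icc (1:ℤ) (a-c) = ∅ from Finset.Icc_eq_empty (by omega), Finset.sum_empty]
    have hA3 : ∀ p ∈ Finset.Icc (1:ℤ) (c-a),
        (((c-a:ℤ):ℝ) - (p:ℝ)) * (if Even p then (p:ℝ)*((1+b)*((p:ℝ)^2-4)+b^2*(5*(p:ℝ)^2-12*(p:ℝ)+4))*(1/(192*(a:ℝ))) else 0) = (if Even p then 0 + (((c:ℝ)-(a:ℝ))*(4*b^2-4*b-4)*(1/(192*(a:ℝ))))*(p:ℝ) + ((-(4*b^2-4*b-4) + ((c:ℝ)-(a:ℝ))*(-12*b^2))*(1/(192*(a:ℝ))))*(p:ℝ)^2 + ((12*b^2 + ((c:ℝ)-(a:ℝ))*(1+b+5*b^2))*(1/(192*(a:ℝ))))*(p:ℝ)^3 + (-(1+b+5*b^2)*(1/(192*(a:ℝ))))*(p:ℝ)^4 else 0 + 0*(p:ℝ) + 0*(p:ℝ)^2 + 0*(p:ℝ)^3 + 0*(p:ℝ)^4) := by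
      intro p hp
      split_ifs <;> push_cast <;> ring
    rw [Finset.sum_congr rfl hA3, sumE 0 (((c:ℝ)-(a:ℝ))*(4*b^2-4*b-4)*(1/(192*(a:ℝ)))) ((-(4*b^2-4*b-4) + ((c:ℝ)-(a:ℝ))*(-12*b^2))*(1/(192*(a:ℝ)))) ((12*b^2 + ((c:ℝ)-(a:ℝ))*(1+b+5*b^2))*(1/(192*(a:ℝ)))) (-(1+b+5*b^2)*(1/(192*(a:ℝ)))) 0 0 0 0 0 (c-a) (by omega) (by simp only [Int.even_iff, Int.odd_iff] at *; omega)]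
    have hB2 : ∀ p ∈ Finset.Icc (1:ℤ) a,
        ramp ((c:ℝ) - (p:ℝ)) * (if Even p then 0 else (b*((a:ℝ)-1)/(8*(a:ℝ)))*((p:ℝ)*((a:ℝ)-(p:ℝ)))) = (if Even p then 0 + 0*(p:ℝ) + 0*(p:ℝ)^2 + 0*(p:ℝ)^3 + 0*(p:ℝ)^4 else 0 + ((a:ℝ)*(c:ℝ)*(b*((a:ℝ)-1)/(8*(a:ℝ))))*(p:ℝ) + (-((a:ℝ)+(c:ℝ))*(b*((a:ℝ)-1)/(8*(a:ℝ))))*(p:ℝ)^2 + ((b*((a:ℝ)-1)/(8*(a:ℝ))))*(p:ℝ)^3 + 0*(p:ℝ)^4) := by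
      intro p hp
      rw [ramp_of_nonneg (show (0:ℝ) ≤ (c:ℝ)-(p:ℝ) by
        have h1' : p ≤ c := le_trans (Finset.mem_Icc.mp hp).2 hac
        have h' : (p:ℝ) ≤ (c:ℝ) := by exact_mod_cast h1'
        linarith)]
      split_ifs <;> push_cast <;> ring
    rw [Finset.sum_congr rfl hB2, sumO 0 0 0 0 0 0 ((a:ℝ)*(c:ℝ)*(b*((a:ℝ)-1)/(8*(a:ℝ)))) (-((a:ℝ)+(c:ℝ))*(b*((a:ℝ)-1)/(8*(a:ℝ)))) ((b*((a:ℝ)-1)/(8*(a:ℝ)))) 0 (a) (by omega) hea]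
    rw [abs_of_nonpos (show (a:ℝ) - (c:ℝ) ≤ (0:ℝ) by
      have h' : (a:ℝ) ≤ (c:ℝ) := by exact_mod_cast hac
      linarith)]
    push_cast
    field_simp
    ring

/-- The value of `N_{1,2}` (recall `h = 2g`, so `h = 2`), in terms of
`s = L₁+L₂`, `q = L₁²+L₂²`, `π = L₁L₂` and `Δ = |L₁-L₂|`, in the two parity cases. -/
theorem N_one_two (b : ℝ) (N : ℤ → List ℤ → ℝ)
    (hzero : ZeroConvention N) (hpar : ParitySupported N)
    (hinit : InitialConditions b N) (hrec : AsymRecursion b N) :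
    ∀ L1 L2 : ℤ, 0 < L1 → 0 < L2 →
      let s : ℝ := (L1 : ℝ) + (L2 : ℝ)
      let q : ℝ := (L1 : ℝ) ^ 2 + (L2 : ℝ) ^ 2
      let π : ℝ := (L1 : ℝ) * (L2 : ℝ)
      let Δ : ℝ := |(L1 : ℝ) - (L2 : ℝ)|
      ((Even L1 ∧ Even L2 →
          N 2 [L1, L2] =
            b ^ 2 / 1536 *
              (Δ ^ 4 + 4 * Δ ^ 3 * (s - 2) + 2 * Δ ^ 2 * (q + 2 * π - 6 * s + 6)
                - 16 * Δ * (s - 2)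
                + (s - 4) * (s - 2) * (3 * q + 6 * π + 6 * s - 8))
            + (b + 1) / 768 * (q - 8) * (q - 4)) ∧
       (Odd L1 ∧ Odd L2 →
          N 2 [L1, L2] =
            b ^ 2 / 1536 *
              (Δ ^ 4 + 4 * Δ ^ 3 * (s - 2) + 2 * Δ ^ 2 * (q + 2 * π - 6 * s)
                - 16 * Δ * (s - 2) + 12 * (s - 2) ^ 2
                + (s - 4) * (s - 2) * (3 * q + 6 * π + 6 * s - 8))
            + (b + 1) / 768 * (q - 10) * (q - 2))) := by
  intro L1 L2 hL1 hL2
  intro s q π Δ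
  constructor
  · rintro ⟨hE1, hE2⟩
    exact main_ee b N hzero hinit hrec L1 L2 hL1 hL2 hE1 hE2
  · rintro ⟨hO1, hO2⟩
    exact main_oo b N hzero hinit hrec L1 L2 hL1 hL2 hO1 hO2

end
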